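/- If a single-intervention process tensor has classical memory, i.e. T[A] = Σᵢ Φᵢ(A(Iᵢ(ρ₀))) where {Iᵢ} is a quantum instrument (each Iᵢ completely positive, Σᵢ Iᵢ trace preserving) and each Φᵢ is a CPT map, then its Choi state is separable across the cut between the first time segment (initial state and intervention input) and the second time segment (intervention output and final state): χ[T] = Σᵢ pᵢ T₁,ᵢ ⊗ T₂,ᵢ with density matrices T₁,ᵢ, T₂,ᵢ and probabilities pᵢ. -/

import Mathlib

open Matrix
open scoped Kronecker Classical ComplexOrder

noncomputable section

/-- A density matrix: positive semidefinite with unit trace. -/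
def IsDensity {N : Type*} [Fintype N] (ρ : Matrix N N ℂ) : Prop :=
  ρ.PosSemidef ∧ ρ.trace = 1

/-- Outer product `|ψ⟩⟨ψ|`. -/
def outer {N : Type*} (ψ : N → ℂ) : Matrix N N ℂ :=
  Matrix.of fun i j => ψ i * star (ψ j)

/-- Squared norm of a vector. -/
def vnormSq {N : Type*} [Fintype N] (ψ : N → ℂ) : ℝ := ∑ x, ‖ψ x‖ ^ 2

/-- Partial transpose with respect to the first tensor factor. -/
def pt₁ {m n : Type*} (ρ : Matrix (m × n) (m × n) ℂ) : Matrix (m × n) (m × n) ℂ :=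
  Matrix.of fun p q => ρ (q.1, p.2) (p.1, q.2)

/-- Partial transpose with respect to the second tensor factor. -/
def pt₂ {m n : Type*} (ρ : Matrix (m × n) (m × n) ℂ) : Matrix (m × n) (m × n) ℂ :=
  Matrix.of fun p q => ρ (p.1, q.2) (q.1, p.2)

/-- Partial trace over the first tensor factor. -/
def ptr₁ {m n : Type*} [Fintype m] (ρ : Matrix (m × n) (m × n) ℂ) : Matrix n n ℂ :=
  Matrix.of fun j l => ∑ i, ρ (i, j) (i, l)

/-- Partial trace over the second tensor factor. -/
def ptr₂ {m n : Type*} [Fintype n] (ρ : Matrix (m × n) (m × n) ℂ) : Matrix m m ℂ :=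
  Matrix.of fun i k => ∑ j, ρ (i, j) (k, j)

/-- Trace norm (sum of singular values): `‖A‖₁ = tr √(AᴴA)`. -/
def traceNorm {N : Type*} [Fintype N] [DecidableEq N] (A : Matrix N N ℂ) : ℝ :=
  (((Matrix.posSemidef_conjTranspose_mul_self A).1.eigenvectorUnitary : Matrix N N ℂ) *
    diagonal (((↑) : ℝ → ℂ) ∘ (√·) ∘ (Matrix.posSemidef_conjTranspose_mul_self A).1.eigenvalues) *
    (star ((Matrix.posSemidef_conjTranspose_mul_self A).1.eigenvectorUnitary : Matrix N N ℂ))).trace.re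

/-- Purity `tr ρ²` (real part). -/
def purity {N : Type*} [Fintype N] (ρ : Matrix N N ℂ) : ℝ := ((ρ * ρ).trace).re

/-- Separability of a bipartite density matrix. -/
def Separable {m n : Type*} [Fintype m] [Fintype n]
    (ρ : Matrix (m × n) (m × n) ℂ) : Prop :=
  ∃ (k : ℕ) (p : Fin k → ℝ) (σ : Fin k → Matrix m m ℂ) (τ : Fin k → Matrix n n ℂ),
    (∀ i, 0 ≤ p i) ∧ (∑ i, p i = 1) ∧ (∀ i, IsDensity (σ i)) ∧ (∀ i, IsDensity (τ i)) ∧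
    ρ = ∑ i, (p i : ℂ) • (σ i ⊗ₖ τ i)

/-- Extension `E ⊗ id` of a map on the first factor to a bipartite space. -/
def tensExtA {s n : Type*} (E : Matrix s s ℂ → Matrix s s ℂ)
    (X : Matrix (s × n) (s × n) ℂ) : Matrix (s × n) (s × n) ℂ :=
  Matrix.of fun p q => E (Matrix.of fun i k => X (i, p.2) (k, q.2)) p.1 q.1

/-- Extension `id ⊗ A` of a map on the second factor to a bipartite space. -/
def tensExtSys {e s : Type*} (A : Matrix s s ℂ → Matrix s s ℂ)
    (X : Matrix (e × s) (e × s) ℂ) : Matrix (e × s) (e × s) ℂ :=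
  Matrix.of fun p q => A (Matrix.of fun i k => X (p.1, i) (q.1, k)) p.2 q.2

/-- Complete positivity: `E ⊗ id_n` maps PSD matrices to PSD matrices for every `n`. -/
def IsCP {s : Type*} [Fintype s] (E : Matrix s s ℂ → Matrix s s ℂ) : Prop :=
  ∀ (n : ℕ) (X : Matrix (s × Fin n) (s × Fin n) ℂ), X.PosSemidef → (tensExtA E X).PosSemidef

/-- Trace preservation. -/
def IsTP {s : Type*} [Fintype s] (E : Matrix s s ℂ → Matrix s s ℂ) : Prop :=
  ∀ X, (E X).trace = X.trace

/-- The maximally entangled unit vector `|Ψ⁺⟩ = (1/√d) Σᵢ |i⟩⊗|i⟩`. -/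
def maxEntVec (d : ℕ) : Fin d × Fin d → ℂ :=
  fun p => if p.1 = p.2 then (((Real.sqrt d)⁻¹ : ℝ) : ℂ) else 0

/-- The Choi state `χ[E] = (E ⊗ id)(|Ψ⁺⟩⟨Ψ⁺|)` of a map `E`. -/
def ChoiMap {d : ℕ} (E : Matrix (Fin d) (Fin d) ℂ → Matrix (Fin d) (Fin d) ℂ) :
    Matrix (Fin d × Fin d) (Fin d × Fin d) ℂ :=
  tensExtA E (outer (maxEntVec d))

/-- Choi state of a single-intervention process tensor `T`, viewed as a function of the
initial system state and the intervention (a CP map). The first index pair is the first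
time segment (intervention input leg, initial state leg), the second pair is the second
time segment (final state leg, intervention output leg). It is obtained by letting `T`
act on halves of maximally entangled pairs, i.e. on matrix units with `1/d` weights. -/
def ChoiPT {d : ℕ}
    (T : Matrix (Fin d) (Fin d) ℂ →
      (Matrix (Fin d) (Fin d) ℂ → Matrix (Fin d) (Fin d) ℂ) → Matrix (Fin d) (Fin d) ℂ) :
    Matrix ((Fin d × Fin d) × (Fin d × Fin d)) ((Fin d × Fin d) × (Fin d × Fin d)) ℂ :=
  Matrix.of fun p q => (d : ℂ)⁻¹ * (d : ℂ)⁻¹ *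
    (T (Matrix.single p.1.2 q.1.2 1)
       (fun ρ => ρ p.1.1 q.1.1 • Matrix.single p.2.2 q.2.2 1)) p.2.1 q.2.1

/-- A single-intervention process tensor has classical memory if it is a composition of
conditioned instruments: `T[ρ, A] = Σᵢ Φᵢ(A(Iᵢ(ρ)))` with `{Iᵢ}` a quantum instrument
(each `Iᵢ` CP, their sum trace preserving) and each `Φᵢ` a CPT map. -/
def HasClassicalMemory {d : ℕ}
    (T : Matrix (Fin d) (Fin d) ℂ →
      (Matrix (Fin d) (Fin d) ℂ → Matrix (Fin d) (Fin d) ℂ) → Matrix (Fin d) (Fin d) ℂ) :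
    Prop :=
  ∃ (k : ℕ) (I Φ : Fin k → (Matrix (Fin d) (Fin d) ℂ → Matrix (Fin d) (Fin d) ℂ)),
    (∀ i, IsLinearMap ℂ (I i)) ∧ (∀ i, IsCP (I i)) ∧ IsTP (fun ρ => ∑ i, I i ρ) ∧
    (∀ i, IsLinearMap ℂ (Φ i)) ∧ (∀ i, IsCP (Φ i)) ∧ (∀ i, IsTP (Φ i)) ∧
    (∀ ρ A, T ρ A = ∑ i, Φ i (A (I i ρ)))

/-- Action of a Kraus operator on the first factor of a bipartite vector: `(L ⊗ I)ψ`. -/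
def lact {m n : Type*} [Fintype m] (L : Matrix m m ℂ) (ψ : m × n → ℂ) : m × n → ℂ :=
  fun p => ∑ i, L p.1 i * ψ (i, p.2)

/-- Concurrence of a pure bipartite state: `C(ψ) = √(2(1 − tr((tr₂|ψ⟩⟨ψ|)²)))`. -/
def concPure {m n : Type*} [Fintype m] [Fintype n] (ψ : m × n → ℂ) : ℝ :=
  Real.sqrt (2 * (1 - purity (ptr₂ (outer ψ))))

/-- The set of average values `Σₖ pₖ f(ψₖ)` over all pure-state decompositions of `ρ`. -/
def decompAvgs {m n : Type*} [Fintype m] [Fintype n]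
    (f : (m × n → ℂ) → ℝ) (ρ : Matrix (m × n) (m × n) ℂ) : Set ℝ :=
  { r | ∃ (k : ℕ) (p : Fin k → ℝ) (ψ : Fin k → m × n → ℂ),
      (∀ i, 0 < p i) ∧ (∑ i, p i = 1) ∧ (∀ i, vnormSq (ψ i) = 1) ∧
      (ρ = ∑ i, (p i : ℂ) • outer (ψ i)) ∧ r = ∑ i, p i * f (ψ i) }

/-- An entanglement monotone: a nonnegative function of pure bipartite states whose
average does not increase under local CP operations (given by Kraus operators) on the
system (first) factor. -/
def IsEntMonotone {m n : Type*} [Fintype m] [Fintype n] (f : (m × n → ℂ) → ℝ) : Prop :=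
  (∀ ψ, 0 ≤ f ψ) ∧
  ∀ (k : ℕ) (L : Fin k → Matrix m m ℂ), (∑ j, (L j)ᴴ * L j) = 1 →
    ∀ ψ : m × n → ℂ, vnormSq ψ = 1 →
      (∑ j, if vnormSq (lact (L j) ψ) = 0 then 0 else
        vnormSq (lact (L j) ψ) *
          f (fun x => (((Real.sqrt (vnormSq (lact (L j) ψ)))⁻¹ : ℝ) : ℂ) * lact (L j) ψ x))
        ≤ f ψ

end

section Aux

open Complex

lemma outer_posSemidef {N : Type*} [Fintype N] (ψ : N → ℂ) : (outer ψ).PosSemidef := by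
  refine Matrix.PosSemidef.of_dotProduct_mulVec_nonneg ?_ ?_
  · ext i j
    simp [outer, Matrix.conjTranspose_apply, mul_comm]
  · intro x
    have h1 : star x ⬝ᵥ (outer ψ) *ᵥ x
        = (∑ i, star (x i) * ψ i) * (∑ j, star (ψ j) * x j) := by
      rw [Finset.sum_mul_sum]
      simp only [dotProduct, Matrix.mulVec, dotProduct, outer,
        Matrix.of_apply, Finset.mul_sum, Pi.star_apply]
      refine Finset.sum_congr rfl fun i _ => Finset.sum_congr rfl fun j _ => by ring
    have h2 : (∑ i, star (x i) * ψ i) = star (∑ j, star (ψ j) * x j) := by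
      rw [star_sum]
      exact Finset.sum_congr rfl fun i _ => by simp [mul_comm]
    rw [h1, h2]
    exact star_mul_self_nonneg _

lemma choiMap_apply {d : ℕ} (hd : 0 < d)
    {E : Matrix (Fin d) (Fin d) ℂ → Matrix (Fin d) (Fin d) ℂ} (hE : IsLinearMap ℂ E)
    (a b c e : Fin d) :
    ChoiMap E (a, b) (c, e) = (d : ℂ)⁻¹ * (E (Matrix.single b e 1)) a c := by
  have key : (Matrix.of fun i k => outer (maxEntVec d) (i, b) (k, e))
      = (d : ℂ)⁻¹ • Matrix.single b e (1 : ℂ) := by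
    ext i k
    simp only [Matrix.of_apply, outer, maxEntVec, Matrix.smul_apply,
      Matrix.single, smul_eq_mul]
    have hs : (((Real.sqrt d : ℝ)) : ℂ)⁻¹ * (((Real.sqrt d : ℝ)) : ℂ)⁻¹
        = (d : ℂ)⁻¹ := by
      rw [← mul_inv, ← Complex.ofReal_mul, Real.mul_self_sqrt (by positivity)]
      push_cast
      ring
    by_cases hib : i = b <;> by_cases hke : k = e
    · simp [hib, hke, hs, Complex.star_def, Complex.conj_ofReal]
    · simp [hib, hke, Ne.symm hke, Complex.star_def, Complex.conj_ofReal]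
    · simp [hib, Ne.symm hib, hke, Complex.star_def, Complex.conj_ofReal]
    · simp [hib, Ne.symm hib, hke, Ne.symm hke]
  show E (Matrix.of fun i k => outer (maxEntVec d) (i, b) (k, e)) a c = _
  rw [key, hE.map_smul]
  simp

lemma choiMap_trace {d : ℕ} (hd : 0 < d)
    {E : Matrix (Fin d) (Fin d) ℂ → Matrix (Fin d) (Fin d) ℂ} (hE : IsLinearMap ℂ E) :
    (ChoiMap E).trace = (d : ℂ)⁻¹ * ∑ b, (E (Matrix.single b b 1)).trace := by
  rw [Matrix.trace, Finset.mul_sum]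
  rw [Fintype.sum_prod_type]
  rw [Finset.sum_comm]
  refine Finset.sum_congr rfl fun b _ => ?_
  rw [Matrix.trace, Finset.mul_sum]
  exact Finset.sum_congr rfl fun a _ => by
    simpa using choiMap_apply hd hE a b a b

lemma herm_trace_re {N : Type*} [Fintype N] {A : Matrix N N ℂ} (h : A.IsHermitian) :
    ((A.trace.re : ℝ) : ℂ) = A.trace := by
  have : (starRingEnd ℂ) A.trace = A.trace := by
    have := Matrix.trace_conjTranspose A
    rw [h.eq] at this
    simpa [Complex.star_def] using this.symm
  exact Complex.conj_eq_iff_re.mp this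

lemma psd_trace_re_nonneg {N : Type*} [Fintype N] [DecidableEq N] {A : Matrix N N ℂ}
    (hA : A.PosSemidef) : 0 ≤ A.trace.re := by
  obtain ⟨B, rfl⟩ : ∃ B : Matrix N N ℂ, A = Bᴴ * B := by
    open scoped MatrixOrder in exact CStarAlgebra.nonneg_iff_eq_star_mul_self.mp hA.nonneg
  have : (Bᴴ * B).trace = ∑ i, ∑ j, ((Complex.normSq (B j i) : ℝ) : ℂ) := by
    rw [Matrix.trace]
    refine Finset.sum_congr rfl fun i _ => ?_
    simp only [Matrix.diag_apply, Matrix.mul_apply, Matrix.conjTranspose_apply]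
    exact Finset.sum_congr rfl fun j _ => by
      rw [Complex.star_def, mul_comm, Complex.mul_conj]
  rw [this]
  have : (∑ i, ∑ j, ((Complex.normSq (B j i) : ℝ) : ℂ)).re
      = ∑ i, ∑ j, Complex.normSq (B j i) := by
    simp
  rw [this]
  exact Finset.sum_nonneg fun i _ => Finset.sum_nonneg fun j _ => Complex.normSq_nonneg _

lemma psd_trace_zero {N : Type*} [Fintype N] [DecidableEq N] {A : Matrix N N ℂ}
    (hA : A.PosSemidef) (h : A.trace = 0) : A = 0 := by
  obtain ⟨B, rfl⟩ : ∃ B : Matrix N N ℂ, A = Bᴴ * B := by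
    open scoped MatrixOrder in exact CStarAlgebra.nonneg_iff_eq_star_mul_self.mp hA.nonneg
  have htr : (Bᴴ * B).trace = ∑ i, ∑ j, ((Complex.normSq (B j i) : ℝ) : ℂ) := by
    rw [Matrix.trace]
    refine Finset.sum_congr rfl fun i _ => ?_
    simp only [Matrix.diag_apply, Matrix.mul_apply, Matrix.conjTranspose_apply]
    exact Finset.sum_congr rfl fun j _ => by
      rw [Complex.star_def, mul_comm, Complex.mul_conj]
  rw [htr] at h
  have hre : ∑ i, ∑ j, Complex.normSq (B j i) = 0 := by
    have := congrArg Complex.re h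
    simpa [Complex.re_sum] using this
  have hB : B = 0 := by
    ext j i
    have h1 : ∀ i ∈ (Finset.univ : Finset N), ∑ j, Complex.normSq (B j i) = 0 := by
      rw [Finset.sum_eq_zero_iff_of_nonneg
        (fun i _ => Finset.sum_nonneg fun j _ => Complex.normSq_nonneg _)] at hre
      exact hre
    have h2 := (Finset.sum_eq_zero_iff_of_nonneg
      (fun j _ => Complex.normSq_nonneg (B j i))).mp (h1 i (Finset.mem_univ i)) j
      (Finset.mem_univ j)
    simpa [Complex.normSq_eq_zero] using h2
  rw [hB]
  simp

lemma psd_smul_inv {N : Type*} [Fintype N] {A : Matrix N N ℂ} (hA : A.PosSemidef)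
    {c : ℝ} (hc : 0 ≤ c) : ((c : ℂ) • A).PosSemidef := by
  refine Matrix.PosSemidef.of_dotProduct_mulVec_nonneg ?_ ?_
  · ext i j
    simp only [Matrix.conjTranspose_apply, Matrix.smul_apply, star_smul, smul_eq_mul]
    simp only [star_mul', Complex.star_def, Complex.conj_ofReal]
    congr 1
    exact congrFun (congrFun hA.1 i) j
  · intro x
    have := hA.dotProduct_mulVec_nonneg x
    have hv : ((c : ℂ) • A) *ᵥ x = (c : ℂ) • (A *ᵥ x) := by
      rw [Matrix.smul_mulVec]
    rw [hv, dotProduct_smul, smul_eq_mul]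
    exact mul_nonneg (by exact_mod_cast hc) this

end Aux

/-- a single-intervention process tensor with classical memory,
`T[ρ, A] = Σᵢ Φᵢ(A(Iᵢ(ρ)))` with `{Iᵢ}` a quantum instrument and `Φᵢ` CPT maps, has a
separable Choi state across the cut between the two time segments. -/
theorem stmt9 {d : ℕ} (hd : 0 < d)
    (T : Matrix (Fin d) (Fin d) ℂ →
      (Matrix (Fin d) (Fin d) ℂ → Matrix (Fin d) (Fin d) ℂ) → Matrix (Fin d) (Fin d) ℂ)
    (k : ℕ) (I Φ : Fin k → (Matrix (Fin d) (Fin d) ℂ → Matrix (Fin d) (Fin d) ℂ))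
    (hIlin : ∀ i, IsLinearMap ℂ (I i)) (hIcp : ∀ i, IsCP (I i))
    (hItp : IsTP (fun ρ => ∑ i, I i ρ))
    (hΦlin : ∀ i, IsLinearMap ℂ (Φ i)) (hΦcp : ∀ i, IsCP (Φ i)) (hΦtp : ∀ i, IsTP (Φ i))
    (hT : ∀ ρ A, T ρ A = ∑ i, Φ i (A (I i ρ))) :
    Separable (ChoiPT T) := by
  classical
  have hdc : (d : ℂ) ≠ 0 := Nat.cast_ne_zero.mpr hd.ne'
  have hσpsd : ∀ i, (ChoiMap (I i)).PosSemidef :=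
    fun i => hIcp i d (outer (maxEntVec d)) (outer_posSemidef _)
  have hτpsd : ∀ i, (ChoiMap (Φ i)).PosSemidef :=
    fun i => hΦcp i d (outer (maxEntVec d)) (outer_posSemidef _)
  have hstdtr : ∀ b : Fin d, (Matrix.single b b (1 : ℂ)).trace = 1 := by
    intro b
    simp [Matrix.trace, Matrix.diag, Matrix.single]
  have hτtr : ∀ i, (ChoiMap (Φ i)).trace = 1 := by
    intro i
    rw [choiMap_trace hd (hΦlin i)]
    have h1 : ∀ b : Fin d, (Φ i (Matrix.single b b 1)).trace = 1 := fun b => by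
      rw [hΦtp i, hstdtr]
    rw [Finset.sum_congr rfl fun b _ => h1 b]
    simp [hdc]
  set p : Fin k → ℝ := fun i => (ChoiMap (I i)).trace.re with hp
  have hptr : ∀ i, ((p i : ℝ) : ℂ) = (ChoiMap (I i)).trace :=
    fun i => herm_trace_re (hσpsd i).1
  have hpnn : ∀ i, 0 ≤ p i := fun i => psd_trace_re_nonneg (hσpsd i)
  have hpsum : ∑ i, p i = 1 := by
    have hsum : ∑ i, (ChoiMap (I i)).trace = 1 := by
      rw [Finset.sum_congr rfl fun i _ => choiMap_trace hd (hIlin i)]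
      rw [← Finset.mul_sum, Finset.sum_comm]
      have h1 : ∀ b : Fin d, ∑ i, (I i (Matrix.single b b 1)).trace = 1 := by
        intro b
        have h2 := hItp (Matrix.single b b 1)
        simp only [Matrix.trace_sum] at h2
        rw [h2, hstdtr]
      rw [Finset.sum_congr rfl fun b _ => h1 b]
      simp [hdc]
    have := congrArg Complex.re hsum
    rw [Complex.re_sum] at this
    simpa using this
  set σ : Fin k → Matrix (Fin d × Fin d) (Fin d × Fin d) ℂ := fun i =>
    if p i = 0 then ((((d : ℝ) * d)⁻¹ : ℝ) : ℂ) • (1 : Matrix (Fin d × Fin d) (Fin d × Fin d) ℂ)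
    else (((p i)⁻¹ : ℝ) : ℂ) • ChoiMap (I i) with hσ
  have hkey : ∀ i, ((p i : ℝ) : ℂ) • σ i = ChoiMap (I i) := by
    intro i
    by_cases h : p i = 0
    · have h0 : (ChoiMap (I i)).trace = 0 := by rw [← hptr i, h]; simp
      rw [hσ]
      simp only [if_pos h, h, psd_trace_zero (hσpsd i) h0]
      simp
    · rw [hσ]
      simp only [if_neg h]
      rw [smul_smul, ← Complex.ofReal_mul, mul_inv_cancel₀ h]
      simp
  have hσden : ∀ i, IsDensity (σ i) := by
    intro i
    by_cases h : p i = 0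
    · rw [hσ]
      simp only [if_pos h]
      constructor
      · exact psd_smul_inv Matrix.PosSemidef.one (by positivity)
      · rw [Matrix.trace_smul, Matrix.trace_one]
        simp only [smul_eq_mul]
        rw [← Complex.ofReal_natCast]
        rw [← Complex.ofReal_mul]
        norm_num [Fintype.card_prod]
        field_simp
    · rw [hσ]
      simp only [if_neg h]
      constructor
      · exact psd_smul_inv (hσpsd i) (inv_nonneg.mpr (hpnn i))
      · rw [Matrix.trace_smul, smul_eq_mul, ← hptr i, ← Complex.ofReal_mul,
          inv_mul_cancel₀ h]
        simp
  refine ⟨k, p, σ, fun i => ChoiMap (Φ i), hpnn, hpsum, hσden,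
    fun i => ⟨hτpsd i, hτtr i⟩, ?_⟩
  have hrw : ∀ i ∈ (Finset.univ : Finset (Fin k)),
      ((p i : ℝ) : ℂ) • (σ i ⊗ₖ ChoiMap (Φ i)) = ChoiMap (I i) ⊗ₖ ChoiMap (Φ i) := by
    intro i _
    rw [← Matrix.smul_kronecker, hkey i]
  rw [Finset.sum_congr rfl hrw]
  ext ⟨⟨p11, p12⟩, ⟨p21, p22⟩⟩ ⟨⟨q11, q12⟩, ⟨q21, q22⟩⟩
  rw [Matrix.sum_apply]
  simp only [ChoiPT, Matrix.of_apply]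
  rw [hT]
  rw [Matrix.sum_apply]
  rw [Finset.mul_sum]
  refine Finset.sum_congr rfl fun i _ => ?_
  rw [(hΦlin i).map_smul]
  rw [Matrix.kroneckerMap_apply]
  rw [choiMap_apply hd (hIlin i), choiMap_apply hd (hΦlin i)]
  simp only [Matrix.smul_apply, smul_eq_mul]
  ring
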